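/- Let a, b, c, d be pairwise distinct positive integers with a < c < b < d. Let A be the ray starting at (a, a!) with direction (b, b!) − (a, a!), and let C be the ray starting at (c, c!) with direction (d, d!) − (c, c!). Then A and C intersect; moreover there is a point z ∈ A ∩ C whose first coordinate satisfies c < z₁ < b. -/

import Mathlib

/-- The point `(x, x!)` in the plane. -/
noncomputable def factPt (x : ℕ) : ℝ × ℝ := ((x : ℝ), (Nat.factorial x : ℝ))

/-- The ray with origin `p` and direction `v`: `{p + t • v : t ≥ 0}`. -/
def ray (p v : ℝ × ℝ) : Set (ℝ × ℝ) := {z | ∃ t : ℝ, 0 ≤ t ∧ z = p + t • v}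

lemma fact_lb (m n : ℕ) (h : m ≤ n) :
    m.factorial + (n - m) * m * m.factorial ≤ n.factorial := by
  induction n with
  | zero => interval_cases m; simp
  | succ n ih =>
    rcases Nat.lt_or_ge m (n+1) with h' | h'
    · have hm : m ≤ n := Nat.lt_succ_iff.mp h'
      have H := ih hm
      have h2 : m * m.factorial ≤ n * n.factorial :=
        Nat.mul_le_mul hm (Nat.factorial_le hm)
      have e : n + 1 - m = (n - m) + 1 := by omega
      have e2 : (n+1).factorial = n.factorial + n * n.factorial := by
        rw [Nat.factorial_succ]; ring
      rw [e, e2]; nlinarith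
    · have : m = n + 1 := le_antisymm h h'
      subst this; simp

lemma fact_ub (m n : ℕ) (hm : 1 ≤ m) (h : m ≤ n) :
    n.factorial ≤ m.factorial + (n - m) * (n - 1) * (n - 1).factorial := by
  induction n with
  | zero => omega
  | succ n ih =>
    rcases Nat.lt_or_ge m (n+1) with h' | h'
    · have hm' : m ≤ n := Nat.lt_succ_iff.mp h'
      have hn1 : 1 ≤ n := le_trans hm hm'
      have H := ih hm'
      have h2 : (n - 1) * (n - 1).factorial ≤ n * n.factorial :=
        Nat.mul_le_mul (Nat.sub_le n 1) (Nat.factorial_le (Nat.sub_le n 1))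
      have e : n + 1 - m = (n - m) + 1 := by omega
      have e1 : n + 1 - 1 = n := by omega
      have e2 : (n+1).factorial = n.factorial + n * n.factorial := by
        rw [Nat.factorial_succ]; ring
      rw [e, e1, e2]; nlinarith
    · have : m = n + 1 := le_antisymm h h'
      subst this; simp

lemma fact_convex (a c b : ℕ) (ha : 1 ≤ a) (h1 : a < c) (h2 : c < b) :
    (b - a) * c.factorial < (b - c) * a.factorial + (c - a) * b.factorial := by
  have hb : b - a = (b - c) + (c - a) := by omega
  have hp : 1 ≤ b - c := by omega
  have hq : 1 ≤ c - a := by omega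
  have hc2 : 2 ≤ c := by omega
  have H1 := fact_lb c b h2.le
  have H2 := fact_ub a c ha h1.le
  have H3 : (c - 1) * (c - 1).factorial < c * c.factorial := by
    calc (c - 1) * (c - 1).factorial < c * (c - 1).factorial :=
          Nat.mul_lt_mul_of_lt_of_le (by omega) le_rfl (Nat.factorial_pos _)
      _ ≤ c * c.factorial := Nat.mul_le_mul_left c (Nat.factorial_le (Nat.sub_le c 1))
  have H4 : (b - c) * (c - a) * ((c - 1) * (c - 1).factorial)
      < (b - c) * (c - a) * (c * c.factorial) :=
    Nat.mul_lt_mul_of_pos_left H3 (Nat.mul_pos (by omega) (by omega))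
  have H5 : (c - a) * (c.factorial + (b - c) * c * c.factorial) ≤ (c - a) * b.factorial :=
    Nat.mul_le_mul_left _ H1
  have H6 : (b - c) * c.factorial
      ≤ (b - c) * (a.factorial + (c - a) * (c - 1) * (c - 1).factorial) :=
    Nat.mul_le_mul_left _ H2
  rw [hb]
  nlinarith [H4, H5, H6]

lemma fact_convexR (a c b : ℕ) (ha : 1 ≤ a) (h1 : a < c) (h2 : c < b) :
    ((b:ℝ) - a) * c.factorial < ((b:ℝ) - c) * a.factorial + ((c:ℝ) - a) * b.factorial := by
  have H := fact_convex a c b ha h1 h2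
  have := (Nat.cast_lt (α := ℝ)).mpr H
  push_cast [Nat.cast_sub h1.le, Nat.cast_sub h2.le, Nat.cast_sub (h1.trans h2).le] at this
  linarith [this]

set_option maxHeartbeats 1000000 in
theorem stmt_7 (a b c d : ℕ) (ha : 0 < a)
    (hac : a < c) (hcb : c < b) (hbd : b < d) :
    ∃ z : ℝ × ℝ,
      z ∈ ray (factPt a) (factPt b - factPt a) ∩ ray (factPt c) (factPt d - factPt c) ∧
      (c : ℝ) < z.1 ∧ z.1 < (b : ℝ) := by
  set α : ℝ := (a : ℝ) with hα
  set β : ℝ := (b : ℝ) with hβ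
  set γ : ℝ := (c : ℝ) with hγ
  set δ : ℝ := (d : ℝ) with hδ
  set A : ℝ := (a.factorial : ℝ) with hA
  set B : ℝ := (b.factorial : ℝ) with hB
  set C : ℝ := (c.factorial : ℝ) with hC
  set D : ℝ := (d.factorial : ℝ) with hD
  have hαγ : α < γ := by rw [hα, hγ]; exact_mod_cast hac
  have hγβ : γ < β := by rw [hγ, hβ]; exact_mod_cast hcb
  have hβδ : β < δ := by rw [hβ, hδ]; exact_mod_cast hbd
  have hβα : (0:ℝ) < β - α := by linarith
  have hδγ : (0:ℝ) < δ - γ := by linarith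
  -- positivity of the two "convexity gaps"
  have hU : 0 < (β - γ) * (A - C) + (γ - α) * (B - C) := by
    have H := fact_convexR a c b ha hac hcb
    have e : (β - γ) * (A - C) + (γ - α) * (B - C)
        = ((β - γ) * A + (γ - α) * B) - (β - α) * C := by ring
    rw [e]; linarith
  have hV : 0 < (δ - β) * (C - B) + (β - γ) * (D - B) := by
    have H := fact_convexR c b d (by omega) hcb hbd
    have e : (δ - β) * (C - B) + (β - γ) * (D - B)
        = ((δ - β) * C + (β - γ) * D) - (δ - γ) * B := by ring
    rw [e]; linarith
  set U : ℝ := (β - γ) * (A - C) + (γ - α) * (B - C) with hUdef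
  set V : ℝ := (δ - β) * (C - B) + (β - γ) * (D - B) with hVdef
  set W : ℝ := U * (δ - γ) + V * (β - α) with hWdef
  have hW : 0 < W := by
    rw [hWdef]
    exact add_pos (mul_pos hU hδγ) (mul_pos hV hβα)
  set t : ℝ := U * (δ - γ) / W with htdef
  have ht0 : 0 < t := div_pos (mul_pos hU hδγ) hW
  have ht1 : t < 1 := by
    rw [htdef, div_lt_one hW, hWdef]
    nlinarith [mul_pos hV hβα]
  set x₀ : ℝ := γ + t * (β - γ) with hx₀
  have hγx : γ < x₀ := by nlinarith
  have hxβ : x₀ < β := by nlinarith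
  set y₀ : ℝ := A + (x₀ - α) * (B - A) / (β - α) with hy₀
  have hW0 : U * (δ - γ) + V * (β - α) ≠ 0 := by
    rw [hWdef] at hW; exact ne_of_gt hW
  have hβα0 : β - α ≠ 0 := ne_of_gt hβα
  have hδγ0 : δ - γ ≠ 0 := ne_of_gt hδγ
  refine ⟨(x₀, y₀), ⟨⟨(x₀ - α) / (β - α), div_nonneg (by linarith) hβα.le, ?_⟩,
      ⟨(x₀ - γ) / (δ - γ), div_nonneg (by linarith) hδγ.le, ?_⟩⟩, hγx, hxβ⟩
  · show (x₀, y₀) = ((α : ℝ), A) + ((x₀ - α) / (β - α)) • (((β : ℝ), B) - ((α : ℝ), A))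
    have h1 : x₀ = α + (x₀ - α) / (β - α) * (β - α) := by field_simp; ring
    have h2 : y₀ = A + (x₀ - α) / (β - α) * (B - A) := by rw [hy₀]; ring
    simp only [Prod.ext_iff, Prod.fst_add, Prod.snd_add, Prod.fst_sub, Prod.snd_sub,
      Prod.smul_fst, Prod.smul_snd, smul_eq_mul]
    exact ⟨h1, h2⟩
  · show (x₀, y₀) = ((γ : ℝ), C) + ((x₀ - γ) / (δ - γ)) • (((δ : ℝ), D) - ((γ : ℝ), C))
    have h1 : x₀ = γ + (x₀ - γ) / (δ - γ) * (δ - γ) := by field_simp; ring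
    have h2 : y₀ = C + (x₀ - γ) / (δ - γ) * (D - C) := by
      have hW0' : ((β - γ) * (A - C) + (γ - α) * (B - C)) * (δ - γ)
          + ((δ - β) * (C - B) + (β - γ) * (D - B)) * (β - α) ≠ 0 := by
        rw [hUdef, hVdef] at hW0; exact hW0
      rw [hy₀, hx₀, htdef, hWdef, hUdef, hVdef]
      field_simp
      ring
    simp only [Prod.ext_iff, Prod.fst_add, Prod.snd_add, Prod.fst_sub, Prod.snd_sub,
      Prod.smul_fst, Prod.smul_snd, smul_eq_mul]
    exact ⟨h1, h2⟩
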